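/- arXiv:1111.4777 — 2 statements merged into one kernel-verified Lean document; each statement's English description precedes it below -/
import Mathlib

section
/- Let R be a commutative ring, and for i = 1,…,n suppose O_i ∈ X·Z_i + R[Z₁,…,Z_n] (i.e. O_i = X·Z_i + f_i with f_i ∈ R[Z₁,…,Z_n]). Then R[X, Z₁,…,Z_n] = (O₁,…,O_n) + R[X] + R[Z₁,…,Z_n], where (O₁,…,O_n) is the ideal generated by the O_i. -/
set_option maxHeartbeats 1000000

open MvPolynomial

theorem stmt_5 (R : Type*) [CommRing R] (n : ℕ)
    (O : Fin n → MvPolynomial (Fin (n + 1)) R)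
    -- `O_i = X·Z_i + f_i` with `f_i ∈ R[Z₁,…,Z_n]` (here `X = X 0`, `Z_i = X i.succ`,
    -- and `R[Z₁,…,Z_n]` is the image of the renaming `Fin.succ`):
    (hO : ∀ i : Fin n,
      O i - X 0 * X i.succ ∈ (rename (Fin.succ : Fin n → Fin (n + 1)) : _ →ₐ[R] _).range) :
    -- `R[X,Z₁,…,Z_n] = (O₁,…,O_n) + R[X] + R[Z₁,…,Z_n]`:
    (Ideal.span (Set.range O)).restrictScalars R ⊔
        Subalgebra.toSubmodule (Algebra.adjoin R {(X 0 : MvPolynomial (Fin (n + 1)) R)}) ⊔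
        Subalgebra.toSubmodule (rename (Fin.succ : Fin n → Fin (n + 1)) : _ →ₐ[R] _).range =
      ⊤ := by
  set M : Submodule R (MvPolynomial (Fin (n + 1)) R) :=
    (Ideal.span (Set.range O)).restrictScalars R ⊔
        Subalgebra.toSubmodule (Algebra.adjoin R {(X 0 : MvPolynomial (Fin (n + 1)) R)}) ⊔
        Subalgebra.toSubmodule (rename (Fin.succ : Fin n → Fin (n + 1)) : _ →ₐ[R] _).range
    with hMdef
  have hA : ∀ p ∈ Ideal.span (Set.range O), p ∈ M := fun p hp =>
    Submodule.mem_sup_left (Submodule.mem_sup_left hp)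
  have hB : ∀ p ∈ Algebra.adjoin R {(X 0 : MvPolynomial (Fin (n + 1)) R)}, p ∈ M := fun p hp =>
    Submodule.mem_sup_left (Submodule.mem_sup_right hp)
  have hCm : ∀ q : MvPolynomial (Fin n) R, rename (Fin.succ : Fin n → Fin (n + 1)) q ∈ M :=
    fun q => Submodule.mem_sup_right ⟨q, rfl⟩
  have key : ∀ (a : ℕ) (q : MvPolynomial (Fin n) R),
      X 0 ^ a * rename (Fin.succ : Fin n → Fin (n + 1)) q ∈ M := by
    intro a
    induction a with
    | zero => intro q; simpa using hCm q
    | succ a ha =>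
      intro q
      induction q using MvPolynomial.induction_on with
      | C c =>
        rw [rename_C]
        refine hB _ (Subalgebra.mul_mem _
          (Subalgebra.pow_mem _ (Algebra.self_mem_adjoin_singleton R _) _) ?_)
        simpa [MvPolynomial.algebraMap_eq] using
          Subalgebra.algebraMap_mem
            (Algebra.adjoin R {(X 0 : MvPolynomial (Fin (n + 1)) R)}) c
      | add p q hp hq => rw [map_add, mul_add]; exact Submodule.add_mem M hp hq
      | mul_X p j hp =>
        obtain ⟨g, hg⟩ := hO j
        have hg' : rename (Fin.succ : Fin n → Fin (n + 1)) g = O j - X 0 * X j.succ := hg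
        have heq : X 0 ^ (a + 1) * rename (Fin.succ : Fin n → Fin (n + 1)) (p * X j)
            = (X 0 ^ a * rename (Fin.succ : Fin n → Fin (n + 1)) p) * O j
              - X 0 ^ a * rename (Fin.succ : Fin n → Fin (n + 1)) (p * g) := by
          rw [map_mul, map_mul, rename_X]
          linear_combination (X 0 ^ a * rename (Fin.succ : Fin n → Fin (n + 1)) p) * hg'
        rw [heq]
        exact Submodule.sub_mem M (hA _ (Ideal.mul_mem_left _ _ (Ideal.subset_span ⟨j, rfl⟩))) (ha _)
  rw [eq_top_iff]
  intro p _
  rw [p.as_sum]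
  refine Submodule.sum_mem _ fun d _ => ?_
  have hmono : (monomial d (coeff d p) : MvPolynomial (Fin (n + 1)) R)
      = X 0 ^ d 0 * rename (Fin.succ : Fin n → Fin (n + 1))
          (C (coeff d p) * ∏ j : Fin n, X j ^ d j.succ) := by
    rw [map_mul, rename_C, map_prod]
    simp only [map_pow, rename_X]
    rw [monomial_eq, Finsupp.prod_pow, Fin.prod_univ_succ]
    ring
  rw [hmono]
  exact key _ _
end

section
/- Let Γ be a congruence subgroup and κ ∈ (1/2)ℕ, and suppose the space M_{2κ}(Γ) of modular forms of weight 2κ contains no nonzero form with q-expansion divisible by q^d (i.e. M_{2κ}(Γ) ∩ ℂ[[q]]·q^d = {0}). Then dim M_κ(Γ) ≤ ⌊(d+1)/2⌋. -/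
/-- If `M_{2κ}(Γ) ∩ ℂ[[q]]·q^d = {0}`, then `dim M_κ(Γ) ≤ ⌊(d+1)/2⌋`.

Here the spaces of modular forms of weight `κ` and `2κ` on the congruence subgroup `Γ`
are regarded, via `q`-expansion, as subspaces `V` (weight `κ`) and `W` (weight `2κ`) of
`ℂ[[q]]`; the only properties used are that the product of two elements of `V` lies in `W`
(the square of a weight-`κ` form has weight `2κ`), and the hypothesis that no nonzero
element of `W` has `q`-expansion divisible by `q^d`. -/
theorem stmt_10 (d : ℕ) (V W : Submodule ℂ (PowerSeries ℂ))
    (hmul : ∀ f ∈ V, ∀ g ∈ V, f * g ∈ W)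
    (hW : ∀ g ∈ W, (∀ i : ℕ, i < d → PowerSeries.coeff i g = 0) → g = 0) :
    Module.rank ℂ V ≤ ((d + 1) / 2 : ℕ) := by
  set m : ℕ := (d + 1) / 2 with hm
  -- the linear map taking the first m coefficients
  let φ : V →ₗ[ℂ] (Fin m → ℂ) :=
    LinearMap.pi fun i : Fin m => (PowerSeries.coeff (R := ℂ) (i : ℕ)).comp V.subtype
  have hinj : Function.Injective φ := by
    rw [← LinearMap.ker_eq_bot, LinearMap.ker_eq_bot']
    intro f hf
    have hcoeff : ∀ i : ℕ, i < m → PowerSeries.coeff i (f : PowerSeries ℂ) = 0 := by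
      intro i hi
      have := congrFun hf ⟨i, hi⟩
      simpa [φ] using this
    have hsq : (f : PowerSeries ℂ) * (f : PowerSeries ℂ) = 0 := by
      apply hW _ (hmul _ f.2 _ f.2)
      intro i hi
      rw [PowerSeries.coeff_mul]
      apply Finset.sum_eq_zero
      intro p hp
      rcases Finset.HasAntidiagonal.mem_antidiagonal.mp hp with rfl
      have h2 : p.1 < m ∨ p.2 < m := by
        by_contra hcon
        push_neg at hcon
        have : d < p.1 + p.2 := by omega
        omega
      rcases h2 with h | h
      · rw [hcoeff _ h, zero_mul]
      · rw [hcoeff _ h, mul_zero]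
    have : (f : PowerSeries ℂ) = 0 := by
      rcases mul_eq_zero.mp hsq with h | h <;> exact h
    exact Subtype.ext this
  calc Module.rank ℂ V ≤ Module.rank ℂ (Fin m → ℂ) := LinearMap.rank_le_of_injective φ hinj
    _ = m := by simp
end
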